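/- Let V be a finite set with irreducible rates r and unique invariant probability π. For a probability μ on V, define J₁(μ) = sup over g : V → ℝ of ∑_{(y,z)∈E} μ(y)r(y,z)(1 − e^{g(z)−g(y)}). Then J₁ is convex in μ, J₁(π) = 0, and for divergence-free Q ≥ 0 and all g, ∑_{(y,z)∈E} Φ(Q(y,z), μ(y)r(y,z)) ≥ ∑_{(y,z)∈E} μ(y)r(y,z)(1 − e^{g(z)−g(y)}); consequently inf over divergence-free Q of ∑ Φ(Q(y,z), μ(y)r(y,z)) ≥ J₁(μ). -/

import Mathlib

open scoped ENNReal

/-- The extended rate function `Φ`: `Φ(q,p) = q log(q/p) - (q-p)` for `q,p > 0`,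
`Φ(0,p) = p`, `Φ(q,0) = ∞` for `q > 0`. -/
noncomputable def PhiE (q p : ℝ) : ℝ≥0∞ :=
  if q = 0 then ENNReal.ofReal p
  else if p = 0 then ⊤
  else ENNReal.ofReal (q * Real.log (q / p) - (q - p))

/-- The Donsker–Varadhan functional
`J₁(μ) = sup_g ∑_{y,z} μ(y) r(y,z) (1 - e^{g(z)-g(y)})`. -/
noncomputable def J1 {V : Type*} [Fintype V] (r : V → V → ℝ) (μ : V → ℝ) : ℝ :=
  ⨆ g : V → ℝ, ∑ y : V, ∑ z : V, μ y * r y z * (1 - Real.exp (g z - g y))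

/-- Real-valued version of `Φ` on the "finite" region. -/
noncomputable def phiR (q p : ℝ) : ℝ :=
  if q = 0 then p else q * Real.log (q / p) - (q - p)

/-- Legendre duality pointwise bound: `p (1 - e^f) ≤ φ(q,p) - q f`. -/
lemma key_pointwise (q p f : ℝ) (hq : 0 ≤ q) (hp : 0 ≤ p) (hqp : q ≠ 0 → p ≠ 0) :
    p * (1 - Real.exp f) ≤ phiR q p - q * f := by
  rcases eq_or_ne q 0 with h | h
  · subst h
    rw [phiR, if_pos rfl]
    nlinarith [Real.exp_pos f, mul_nonneg hp (Real.exp_pos f).le]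
  · have hp' : 0 < p := lt_of_le_of_ne hp (Ne.symm (hqp h))
    have hq' : 0 < q := lt_of_le_of_ne hq (Ne.symm h)
    have hx : 0 < p * Real.exp f / q := by positivity
    have hlog := Real.log_le_sub_one_of_pos hx
    rw [Real.log_div (by positivity) hq'.ne', Real.log_mul hp'.ne' (Real.exp_pos f).ne',
      Real.log_exp] at hlog
    rw [phiR, if_neg h, Real.log_div hq'.ne' hp'.ne']
    have h2 : q * (Real.log p + f - Real.log q) ≤ q * (p * Real.exp f / q - 1) :=
      mul_le_mul_of_nonneg_left hlog hq'.le
    have h3 : q * (p * Real.exp f / q - 1) = p * Real.exp f - q := by field_simp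
    nlinarith

lemma phiR_nonneg (q p : ℝ) (hq : 0 ≤ q) (hp : 0 ≤ p) (hqp : q ≠ 0 → p ≠ 0) :
    0 ≤ phiR q p := by
  have := key_pointwise q p 0 hq hp hqp
  simpa using this

/-- Integration by parts for divergence-free `Q`: the discrete gradient sums to zero. -/
lemma sum_grad_zero {V : Type*} [Fintype V] (Q : V → V → ℝ) (g : V → ℝ)
    (hdiv : ∀ y : V, (∑ z : V, Q y z) = ∑ z : V, Q z y) :
    ∑ y : V, ∑ z : V, Q y z * (g z - g y) = 0 := by
  have h1 : ∑ y : V, ∑ z : V, Q y z * g z = ∑ y : V, ∑ z : V, Q y z * g y := by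
    rw [Finset.sum_comm]
    refine Finset.sum_congr rfl fun z _ => ?_
    rw [← Finset.sum_mul, ← Finset.sum_mul, ← hdiv z]
  simp only [mul_sub, Finset.sum_sub_distrib, h1, sub_self]

/-- The family whose supremum defines `J1` is bounded above. -/
lemma F_bddAbove {V : Type*} [Fintype V] (r : V → V → ℝ) (μ : V → ℝ)
    (hr0 : ∀ x y, 0 ≤ r x y) (hμ : ∀ y, 0 ≤ μ y) :
    BddAbove (Set.range fun g : V → ℝ =>
      ∑ y : V, ∑ z : V, μ y * r y z * (1 - Real.exp (g z - g y))) := by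
  refine ⟨∑ y : V, ∑ z : V, μ y * r y z, ?_⟩
  rintro x ⟨g, rfl⟩
  refine Finset.sum_le_sum fun y _ => Finset.sum_le_sum fun z _ => ?_
  nlinarith [Real.exp_pos (g z - g y), mul_nonneg (hμ y) (hr0 y z)]

theorem stmt_16 (V : Type*) [Fintype V]
    (r : V → V → ℝ) (hr0 : ∀ x y, 0 ≤ r x y) (hrd : ∀ x, r x x = 0)
    (hirr : ∀ x y : V, x ≠ y → Relation.TransGen (fun a b => 0 < r a b) x y)
    (π : V → ℝ) (hπ : π ∈ stdSimplex ℝ V)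
    (hstat : ∀ x : V, (∑ y : V, π x * r x y) = ∑ y : V, π y * r y x) :
    ConvexOn ℝ (stdSimplex ℝ V) (J1 r) ∧
    J1 r π = 0 ∧
    (∀ μ ∈ stdSimplex ℝ V, ∀ Q : V → V → ℝ,
      (∀ y z, 0 ≤ Q y z) → (∀ y z, ¬ (y ≠ z ∧ 0 < r y z) → Q y z = 0) →
      (∀ y : V, (∑ z : V, Q y z) = ∑ z : V, Q z y) →
      (∀ g : V → ℝ,
        ENNReal.ofReal (∑ y : V, ∑ z : V, μ y * r y z * (1 - Real.exp (g z - g y)))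
          ≤ ∑ y : V, ∑ z : V, PhiE (Q y z) (μ y * r y z)) ∧
      ENNReal.ofReal (J1 r μ) ≤ ∑ y : V, ∑ z : V, PhiE (Q y z) (μ y * r y z)) := by
  refine ⟨?_, ?_, ?_⟩
  · -- Convexity as a sup of linear functionals
    refine ⟨convex_stdSimplex ℝ V, ?_⟩
    intro μ hμ ν hν a b ha hb hab
    simp only [J1]
    apply ciSup_le
    intro g
    have hlin : ∑ y : V, ∑ z : V, (a • μ + b • ν) y * r y z * (1 - Real.exp (g z - g y))
        = a * ∑ y : V, ∑ z : V, μ y * r y z * (1 - Real.exp (g z - g y))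
          + b * ∑ y : V, ∑ z : V, ν y * r y z * (1 - Real.exp (g z - g y)) := by
      simp only [Pi.add_apply, Pi.smul_apply, smul_eq_mul, Finset.mul_sum]
      rw [← Finset.sum_add_distrib]
      refine Finset.sum_congr rfl fun y _ => ?_
      rw [← Finset.sum_add_distrib]
      exact Finset.sum_congr rfl fun z _ => by ring
    rw [hlin]
    have h1 : ∑ y : V, ∑ z : V, μ y * r y z * (1 - Real.exp (g z - g y)) ≤ J1 r μ :=
      le_ciSup (F_bddAbove r μ hr0 hμ.1) g
    have h2 : ∑ y : V, ∑ z : V, ν y * r y z * (1 - Real.exp (g z - g y)) ≤ J1 r ν :=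
      le_ciSup (F_bddAbove r ν hr0 hν.1) g
    have := add_le_add (mul_le_mul_of_nonneg_left h1 ha) (mul_le_mul_of_nonneg_left h2 hb)
    simpa [smul_eq_mul, J1] using this
  · -- J1 π = 0
    apply le_antisymm
    · apply ciSup_le
      intro g
      have hdiv : ∀ y : V, (∑ z : V, π y * r y z) = ∑ z : V, π z * r z y := hstat
      have h0 := sum_grad_zero (fun y z => π y * r y z) (-g) hdiv
      calc ∑ y : V, ∑ z : V, π y * r y z * (1 - Real.exp (g z - g y))
          ≤ ∑ y : V, ∑ z : V, π y * r y z * ((-g) z - (-g) y) := by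
            refine Finset.sum_le_sum fun y _ => Finset.sum_le_sum fun z _ => ?_
            have hb : 1 - Real.exp (g z - g y) ≤ (-g) z - (-g) y := by
              have := Real.add_one_le_exp (g z - g y)
              simp only [Pi.neg_apply]
              linarith
            exact mul_le_mul_of_nonneg_left hb (mul_nonneg (hπ.1 y) (hr0 y z))
        _ = 0 := h0
    · have h0 : (0 : ℝ) = ∑ y : V, ∑ z : V,
          π y * r y z * (1 - Real.exp ((fun _ : V => (0:ℝ)) z - (fun _ : V => (0:ℝ)) y)) := by
        simp
      rw [h0]
      exact le_ciSup (F_bddAbove r π hr0 hπ.1) (fun _ => (0:ℝ))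
  · intro μ hμ Q hQ0 hQsupp hQdiv
    have hmain : ∀ g : V → ℝ,
        ENNReal.ofReal (∑ y : V, ∑ z : V, μ y * r y z * (1 - Real.exp (g z - g y)))
          ≤ ∑ y : V, ∑ z : V, PhiE (Q y z) (μ y * r y z) := by
      intro g
      by_cases hcase : ∃ y z, Q y z ≠ 0 ∧ μ y * r y z = 0
      · -- some term is ⊤
        obtain ⟨y, z, hQyz, hp⟩ := hcase
        have htop : PhiE (Q y z) (μ y * r y z) = ⊤ := by
          rw [PhiE, if_neg hQyz, if_pos hp]
        have h1 : PhiE (Q y z) (μ y * r y z) ≤ ∑ w : V, PhiE (Q y w) (μ y * r y w) :=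
          Finset.single_le_sum (f := fun w => PhiE (Q y w) (μ y * r y w))
            (fun _ _ => zero_le) (Finset.mem_univ z)
        have h2 : (∑ w : V, PhiE (Q y w) (μ y * r y w))
            ≤ ∑ x : V, ∑ w : V, PhiE (Q x w) (μ x * r x w) :=
          Finset.single_le_sum (f := fun x => ∑ w : V, PhiE (Q x w) (μ x * r x w))
            (fun _ _ => zero_le) (Finset.mem_univ y)
        calc ENNReal.ofReal _ ≤ ⊤ := le_top
          _ = PhiE (Q y z) (μ y * r y z) := htop.symm
          _ ≤ _ := le_trans h1 h2
      · push_neg at hcase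
        have hpnn : ∀ y z : V, 0 ≤ μ y * r y z := fun y z => mul_nonneg (hμ.1 y) (hr0 y z)
        have hreal : ∑ y : V, ∑ z : V, μ y * r y z * (1 - Real.exp (g z - g y))
            ≤ ∑ y : V, ∑ z : V, phiR (Q y z) (μ y * r y z) := by
          have hsum0 := sum_grad_zero Q g hQdiv
          have step : ∑ y : V, ∑ z : V, μ y * r y z * (1 - Real.exp (g z - g y))
              ≤ ∑ y : V, ∑ z : V, (phiR (Q y z) (μ y * r y z) - Q y z * (g z - g y)) :=
            Finset.sum_le_sum fun y _ => Finset.sum_le_sum fun z _ =>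
              key_pointwise (Q y z) (μ y * r y z) (g z - g y) (hQ0 y z) (hpnn y z)
                (hcase y z)
          calc ∑ y : V, ∑ z : V, μ y * r y z * (1 - Real.exp (g z - g y))
              ≤ ∑ y : V, ∑ z : V, (phiR (Q y z) (μ y * r y z) - Q y z * (g z - g y)) := step
            _ = (∑ y : V, ∑ z : V, phiR (Q y z) (μ y * r y z))
                - ∑ y : V, ∑ z : V, Q y z * (g z - g y) := by
                simp only [Finset.sum_sub_distrib]
            _ = ∑ y : V, ∑ z : V, phiR (Q y z) (μ y * r y z) := by
                rw [hsum0, sub_zero]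
        have hPhiE : ∀ y z : V, PhiE (Q y z) (μ y * r y z)
            = ENNReal.ofReal (phiR (Q y z) (μ y * r y z)) := by
          intro y z
          rcases eq_or_ne (Q y z) 0 with h | h
          · simp [PhiE, phiR, h]
          · rw [PhiE, if_neg h, if_neg (hcase y z h), phiR, if_neg h]
        have hφnn : ∀ y z : V, 0 ≤ phiR (Q y z) (μ y * r y z) := fun y z =>
          phiR_nonneg _ _ (hQ0 y z) (hpnn y z) (hcase y z)
        calc ENNReal.ofReal (∑ y : V, ∑ z : V, μ y * r y z * (1 - Real.exp (g z - g y)))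
            ≤ ENNReal.ofReal (∑ y : V, ∑ z : V, phiR (Q y z) (μ y * r y z)) :=
              ENNReal.ofReal_le_ofReal hreal
          _ = ∑ y : V, ENNReal.ofReal (∑ z : V, phiR (Q y z) (μ y * r y z)) :=
              ENNReal.ofReal_sum_of_nonneg (fun y _ =>
                Finset.sum_nonneg fun z _ => hφnn y z)
          _ = ∑ y : V, ∑ z : V, ENNReal.ofReal (phiR (Q y z) (μ y * r y z)) :=
              Finset.sum_congr rfl fun y _ =>
                ENNReal.ofReal_sum_of_nonneg (fun z _ => hφnn y z)
          _ = ∑ y : V, ∑ z : V, PhiE (Q y z) (μ y * r y z) := by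
              exact Finset.sum_congr rfl fun y _ => Finset.sum_congr rfl fun z _ =>
                (hPhiE y z).symm
    refine ⟨hmain, ?_⟩
    set S := ∑ y : V, ∑ z : V, PhiE (Q y z) (μ y * r y z) with hS
    rcases eq_or_ne S ⊤ with hT | hT
    · rw [hT]; exact le_top
    · have hJ : J1 r μ ≤ S.toReal := by
        simp only [J1]
        apply ciSup_le
        intro g
        have h := hmain g
        by_cases hF : 0 ≤ ∑ y : V, ∑ z : V, μ y * r y z * (1 - Real.exp (g z - g y))
        · exact (ENNReal.ofReal_le_iff_le_toReal hT).mp h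
        · exact le_trans (le_of_lt (not_le.mp hF)) ENNReal.toReal_nonneg
      calc ENNReal.ofReal (J1 r μ) ≤ ENNReal.ofReal S.toReal :=
            ENNReal.ofReal_le_ofReal hJ
        _ = S := ENNReal.ofReal_toReal hT
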